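/- Let n ≥ 1, c > 0, r > 0, m ≥ 1, and let x¹, …, x^m ∈ ℝⁿ each satisfy |xʲᵢ| = c for every coordinate i (each xʲ is a vertex of the cube [−c,c]ⁿ). Then the Lebesgue volume of the set {ζ ∈ ℝⁿ : ‖ζ‖ ≤ r and ‖xʲ + ζ‖_∞ > c for all j = 1,…,m} is at least (1 − m·2^{−n}) times the volume of the closed ball B(0,r). Equivalently, a single perturbation ζ drawn from the equidistribution on B(0,r) simultaneously moves all m points outside the cube with probability at least 1 − m/2ⁿ. -/

import Mathlib

open MeasureTheory
open scoped ENNReal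

section Aux

variable (n : ℕ)

private lemma coord_null (i : Fin n) :
    volume {ζ : EuclideanSpace ℝ (Fin n) | ζ i = 0} = 0 := by
  have h : {ζ : EuclideanSpace ℝ (Fin n) | ζ i = 0} =
      (LinearMap.ker (EuclideanSpace.projₗ i :
        EuclideanSpace ℝ (Fin n) →ₗ[ℝ] ℝ) : Set (EuclideanSpace ℝ (Fin n))) := by
    ext ζ
    simp [LinearMap.mem_ker, EuclideanSpace.projₗ]
  rw [h]
  apply Measure.addHaar_submodule
  intro htop
  have h1 : (EuclideanSpace.single i (1:ℝ)) ∈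
      LinearMap.ker (EuclideanSpace.projₗ i : EuclideanSpace ℝ (Fin n) →ₗ[ℝ] ℝ) := by
    rw [htop]; trivial
  simp [LinearMap.mem_ker, EuclideanSpace.projₗ, EuclideanSpace.single_apply] at h1

/-- Open orthant determined by a sign pattern. -/
private def orth (s : Fin n → Bool) : Set (EuclideanSpace ℝ (Fin n)) :=
  {ζ | ∀ i, if s i then ζ i < 0 else 0 < ζ i}

private lemma orth_measurable (s : Fin n → Bool) : MeasurableSet (orth n s) := by
  have : orth n s = ⋂ i, {ζ : EuclideanSpace ℝ (Fin n) | if s i then ζ i < 0 else 0 < ζ i} := by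
    ext ζ; simp [orth]
  rw [this]
  refine MeasurableSet.iInter fun i => ?_
  have hc : Measurable fun ζ : EuclideanSpace ℝ (Fin n) => ζ i :=
    (EuclideanSpace.proj i : EuclideanSpace ℝ (Fin n) →L[ℝ] ℝ).continuous.measurable
  rcases Bool.dichotomy (s i) with h | h
  · simp only [h, Bool.false_eq_true, if_false]
    exact measurableSet_lt measurable_const hc
  · simp only [h, if_true]
    exact measurableSet_lt hc measurable_const

private lemma orth_volume (r : ℝ) (s : Fin n → Bool) :
    volume (Metric.closedBall (0 : EuclideanSpace ℝ (Fin n)) r ∩ orth n s) =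
    volume (Metric.closedBall (0 : EuclideanSpace ℝ (Fin n)) r ∩ orth n (fun _ => true)) := by
  set f : EuclideanSpace ℝ (Fin n) ≃ₗᵢ[ℝ] EuclideanSpace ℝ (Fin n) :=
    LinearIsometryEquiv.piLpCongrRight 2
      (fun i => if s i then LinearIsometryEquiv.refl ℝ ℝ else LinearIsometryEquiv.neg ℝ)
  have hfap : ∀ (ζ : EuclideanSpace ℝ (Fin n)) (i : Fin n),
      f ζ i = if s i then ζ i else -ζ i := by
    intro ζ i
    rcases Bool.dichotomy (s i) with h | h <;>
      simp [f, LinearIsometryEquiv.piLpCongrRight_apply, h]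
  have hpre : f ⁻¹' (Metric.closedBall (0 : EuclideanSpace ℝ (Fin n)) r ∩
      orth n (fun _ => true)) =
      Metric.closedBall (0 : EuclideanSpace ℝ (Fin n)) r ∩ orth n s := by
    ext ζ
    simp only [Set.mem_preimage, Set.mem_inter_iff, Metric.mem_closedBall,
      dist_zero_right, f.norm_map, orth, Set.mem_setOf_eq, if_true]
    refine and_congr Iff.rfl ?_
    refine forall_congr' fun i => ?_
    rw [hfap]
    rcases Bool.dichotomy (s i) with h | h <;> simp [h]
  have hmp := (LinearIsometryEquiv.measurePreserving f)
  rw [← hpre, hmp.measure_preimage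
    ((Metric.isClosed_closedBall.measurableSet.inter (orth_measurable n _)).nullMeasurableSet)]

private lemma orth_volume_le (r : ℝ) (s : Fin n → Bool) :
    volume (Metric.closedBall (0 : EuclideanSpace ℝ (Fin n)) r ∩ orth n s) ≤
    ((2 : ℝ≥0∞) ^ n)⁻¹ * volume (Metric.closedBall (0 : EuclideanSpace ℝ (Fin n)) r) := by
  set B := Metric.closedBall (0 : EuclideanSpace ℝ (Fin n)) r
  have hdisj : Pairwise (Function.onFun Disjoint (fun t : Fin n → Bool => B ∩ orth n t)) := by
    intro a b hab
    obtain ⟨i, hi⟩ : ∃ i, a i ≠ b i := Function.ne_iff.mp hab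
    refine Set.disjoint_left.mpr fun ζ hζa hζb => ?_
    have h1 := hζa.2 i
    have h2 := hζb.2 i
    rcases Bool.dichotomy (a i) with h | h <;> rcases Bool.dichotomy (b i) with h' | h' <;>
      simp [h, h'] at h1 h2 hi <;> linarith
  have hsum : ∑' t : Fin n → Bool, volume (B ∩ orth n t) = volume (⋃ t, B ∩ orth n t) :=
    (measure_iUnion hdisj fun t =>
      Metric.isClosed_closedBall.measurableSet.inter (orth_measurable n t)).symm
  have hcover : volume (⋃ t, B ∩ orth n t) ≤ volume B :=
    measure_mono (Set.iUnion_subset fun t => Set.inter_subset_left)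
  have hconst : ∀ t : Fin n → Bool, volume (B ∩ orth n t) =
      volume (B ∩ orth n (fun _ => true)) := fun t => orth_volume n r t
  have hcard : (2 : ℝ≥0∞) ^ n * volume (B ∩ orth n s) ≤ volume B := by
    calc (2 : ℝ≥0∞) ^ n * volume (B ∩ orth n s)
        = ∑' t : Fin n → Bool, volume (B ∩ orth n t) := by
          rw [tsum_fintype]
          rw [hconst s]
          simp only [fun t => hconst t]
          rw [Finset.sum_const, Finset.card_univ, Fintype.card_fun, Fintype.card_bool,
            Fintype.card_fin, nsmul_eq_mul]
          norm_num
      _ ≤ volume B := hsum ▸ hcover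
  rw [← ENNReal.div_eq_inv_mul]
  rw [ENNReal.le_div_iff_mul_le (Or.inl (pow_ne_zero n two_ne_zero)) (Or.inl (ENNReal.pow_ne_top ENNReal.ofNat_ne_top))]
  rw [mul_comm]; exact hcard

end Aux

theorem stmt_12 (n : ℕ) (hn : 1 ≤ n) (c r : ℝ) (hc : 0 < c) (hr : 0 < r)
    (m : ℕ) (hm : 1 ≤ m) (x : Fin m → EuclideanSpace ℝ (Fin n))
    (hx : ∀ j i, |x j i| = c) :
    (1 - (m : ℝ≥0∞) * ((2 : ℝ≥0∞) ^ n)⁻¹) *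
        volume (Metric.closedBall (0 : EuclideanSpace ℝ (Fin n)) r) ≤
      volume {ζ : EuclideanSpace ℝ (Fin n) | ‖ζ‖ ≤ r ∧ ∀ j, ∃ i, c < |x j i + ζ i|} := by
  classical
  set B := Metric.closedBall (0 : EuclideanSpace ℝ (Fin n)) r with hB
  set S := {ζ : EuclideanSpace ℝ (Fin n) | ‖ζ‖ ≤ r ∧ ∀ j, ∃ i, c < |x j i + ζ i|} with hS
  set sg : Fin m → Fin n → Bool := fun j i => decide (0 < x j i) with hsg
  -- the bad set for point j is contained in closed orthant, which up to null set is open orthant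
  have hxval : ∀ j i, x j i = c ∨ x j i = -c := by
    intro j i
    rcases abs_cases (x j i) with ⟨h1, _⟩ | ⟨h1, _⟩
    · left; rw [← h1, hx]
    · right; rw [← hx j i, h1]; ring
  have hNull : volume (⋃ i, {ζ : EuclideanSpace ℝ (Fin n) | ζ i = 0}) = 0 := by
    refine le_antisymm ?_ (zero_le)
    calc volume (⋃ i, {ζ : EuclideanSpace ℝ (Fin n) | ζ i = 0})
        ≤ ∑' i, volume {ζ : EuclideanSpace ℝ (Fin n) | ζ i = 0} := measure_iUnion_le _
      _ = 0 := by simp [coord_null n]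
  have hbad : ∀ j : Fin m,
      volume (B ∩ {ζ : EuclideanSpace ℝ (Fin n) | ∀ i, |x j i + ζ i| ≤ c}) ≤
      ((2 : ℝ≥0∞) ^ n)⁻¹ * volume B := by
    intro j
    have hsub : B ∩ {ζ : EuclideanSpace ℝ (Fin n) | ∀ i, |x j i + ζ i| ≤ c} ⊆
        (B ∩ orth n (sg j)) ∪ (⋃ i, {ζ : EuclideanSpace ℝ (Fin n) | ζ i = 0}) := by
      rintro ζ ⟨hζB, hζ⟩
      by_cases hz : ∃ i, ζ i = 0
      · right; obtain ⟨i, hi⟩ := hz; exact Set.mem_iUnion.mpr ⟨i, hi⟩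
      · left
        push_neg at hz
        refine ⟨hζB, fun i => ?_⟩
        have h := hζ i
        rcases hxval j i with hv | hv
        · have hpos : 0 < x j i := hv ▸ hc
          have hle : ζ i ≤ 0 := by
            rw [hv] at h
            rcases abs_le.mp h with ⟨_, h2⟩
            linarith
          have hsgi : sg j i = true := by simp [hsg, hpos]
          simp only [hsgi, if_true]
          exact lt_of_le_of_ne hle (hz i)
        · have hneg : ¬ (0 < x j i) := by rw [hv]; linarith
          have hge : 0 ≤ ζ i := by
            rw [hv] at h
            rcases abs_le.mp h with ⟨h1, _⟩
            linarith
          have hsgi : sg j i = false := by simp [hsg, hneg]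
          simp only [hsgi, Bool.false_eq_true, if_false]
          exact lt_of_le_of_ne hge (Ne.symm (hz i))
    calc volume (B ∩ {ζ : EuclideanSpace ℝ (Fin n) | ∀ i, |x j i + ζ i| ≤ c})
        ≤ volume ((B ∩ orth n (sg j)) ∪ (⋃ i, {ζ : EuclideanSpace ℝ (Fin n) | ζ i = 0})) :=
          measure_mono hsub
      _ ≤ volume (B ∩ orth n (sg j)) + volume (⋃ i, {ζ : EuclideanSpace ℝ (Fin n) | ζ i = 0}) :=
          measure_union_le _ _
      _ = volume (B ∩ orth n (sg j)) := by rw [hNull, add_zero]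
      _ ≤ ((2 : ℝ≥0∞) ^ n)⁻¹ * volume B := orth_volume_le n r (sg j)
  -- B \ S is covered by the bad sets
  have hcover : B \ S ⊆ ⋃ j : Fin m,
      (B ∩ {ζ : EuclideanSpace ℝ (Fin n) | ∀ i, |x j i + ζ i| ≤ c}) := by
    rintro ζ ⟨hζB, hζS⟩
    have hnorm : ‖ζ‖ ≤ r := by
      rwa [hB, Metric.mem_closedBall, dist_zero_right] at hζB
    have : ¬ ∀ j, ∃ i, c < |x j i + ζ i| := fun h => hζS ⟨hnorm, h⟩
    push_neg at this
    obtain ⟨j, hj⟩ := this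
    exact Set.mem_iUnion.mpr ⟨j, hζB, hj⟩
  have hBS : volume (B \ S) ≤ (m : ℝ≥0∞) * (((2 : ℝ≥0∞) ^ n)⁻¹ * volume B) := by
    calc volume (B \ S) ≤ ∑' j : Fin m,
          volume (B ∩ {ζ : EuclideanSpace ℝ (Fin n) | ∀ i, |x j i + ζ i| ≤ c}) :=
          (measure_mono hcover).trans (measure_iUnion_le _)
      _ ≤ ∑' _j : Fin m, ((2 : ℝ≥0∞) ^ n)⁻¹ * volume B := ENNReal.tsum_le_tsum fun j => hbad j
      _ = (m : ℝ≥0∞) * (((2 : ℝ≥0∞) ^ n)⁻¹ * volume B) := by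
          rw [tsum_fintype, Finset.sum_const, Finset.card_univ, Fintype.card_fin, nsmul_eq_mul]
  have hBfin : volume B ≠ ⊤ := (measure_closedBall_lt_top).ne
  have hsplit : volume B ≤ volume S + volume (B \ S) := by
    refine (measure_mono ?_).trans (measure_union_le _ _)
    intro ζ hζ
    by_cases h : ζ ∈ S
    · exact Or.inl h
    · exact Or.inr ⟨hζ, h⟩
  rw [ENNReal.sub_mul (fun _ _ => hBfin), one_mul]
  rw [tsub_le_iff_right]
  calc volume B ≤ volume S + volume (B \ S) := hsplit
    _ ≤ volume S + (m : ℝ≥0∞) * ((2 : ℝ≥0∞) ^ n)⁻¹ * volume B := by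
        rw [mul_assoc]; exact add_le_add le_rfl hBS
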